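/- arXiv:1406.0791 — 2 statements merged into one kernel-verified Lean document; each statement's English description precedes it below -/
import Mathlib

section
/- Andreief's identity: for integrable functions f_1,…,f_r and g_1,…,g_r on a measure space (S, μ), one has ∫_{S^r} det(f_i(x_j))_{i,j=1}^r · det(g_i(x_j))_{i,j=1}^r ∏_{j=1}^r dμ(x_j) = r! · det( ∫_S f_i(x) g_j(x) dμ(x) )_{i,j=1}^r. -/
open MeasureTheory

/-- Andreief's identity: for integrable functions `f₁,…,f_r` and `g₁,…,g_r` on a
measure space `(S, μ)`,
`∫_{S^r} det(fᵢ(xⱼ)) · det(gᵢ(xⱼ)) ∏ dμ(xⱼ) = r! · det(∫ fᵢ g_j dμ)`. -/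
theorem andreief_identity {S : Type*} [MeasurableSpace S] (μ : Measure S) [SigmaFinite μ]
    (r : ℕ) (f g : Fin r → S → ℂ)
    (hmf : ∀ i, Measurable (f i)) (hmg : ∀ i, Measurable (g i))
    (hint : ∀ i j, Integrable (fun x => f i x * g j x) μ) :
    ∫ x : Fin r → S,
        (Matrix.of fun i j => f i (x j)).det * (Matrix.of fun i j => g i (x j)).det
        ∂(Measure.pi fun _ => μ)
      = (r.factorial : ℂ) * (Matrix.of fun i j => ∫ t, f i t * g j t ∂μ).det := by
  classical
  letI : MeasureSpace S := ⟨μ⟩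
  have hvol : (Measure.pi fun _ : Fin r => μ) = (volume : Measure (Fin r → S)) := by
    rw [volume_pi]; rfl
  set A : Matrix (Fin r) (Fin r) ℂ := Matrix.of fun i j => ∫ t, f i t * g j t ∂μ with hA
  -- expand the integrand as a double sum over permutations
  have expand : ∀ x : Fin r → S,
      (Matrix.of fun i j => f i (x j)).det * (Matrix.of fun i j => g i (x j)).det
        = ∑ σ : Equiv.Perm (Fin r), ∑ τ : Equiv.Perm (Fin r),
            (((Equiv.Perm.sign σ : ℤ) : ℂ) * ((Equiv.Perm.sign τ : ℤ) : ℂ)) *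
              ∏ j, (f (σ j) (x j) * g (τ j) (x j)) := by
    intro x
    rw [Matrix.det_apply', Matrix.det_apply', Finset.sum_mul_sum]
    refine Finset.sum_congr rfl fun σ _ => Finset.sum_congr rfl fun τ _ => ?_
    simp only [Matrix.of_apply, Finset.prod_mul_distrib]
    ring
  have hintst : ∀ σ τ : Equiv.Perm (Fin r),
      Integrable (fun x : Fin r → S =>
        (((Equiv.Perm.sign σ : ℤ) : ℂ) * ((Equiv.Perm.sign τ : ℤ) : ℂ)) *
          ∏ j, (f (σ j) (x j) * g (τ j) (x j))) (Measure.pi fun _ => μ) := by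
    intro σ τ
    rw [hvol]
    exact (Integrable.fintype_prod (f := fun j t => f (σ j) t * g (τ j) t)
      (fun j => hint (σ j) (τ j))).const_mul _
  calc
    ∫ x : Fin r → S,
        (Matrix.of fun i j => f i (x j)).det * (Matrix.of fun i j => g i (x j)).det
        ∂(Measure.pi fun _ => μ)
      = ∑ σ : Equiv.Perm (Fin r), ∑ τ : Equiv.Perm (Fin r),
          ∫ x : Fin r → S,
            (((Equiv.Perm.sign σ : ℤ) : ℂ) * ((Equiv.Perm.sign τ : ℤ) : ℂ)) *
              ∏ j, (f (σ j) (x j) * g (τ j) (x j)) ∂(Measure.pi fun _ => μ) := by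
        simp_rw [expand]
        rw [integral_finset_sum _ fun σ _ => integrable_finset_sum _ fun τ _ => hintst σ τ]
        exact Finset.sum_congr rfl fun σ _ =>
          integral_finset_sum _ fun τ _ => hintst σ τ
    _ = ∑ σ : Equiv.Perm (Fin r), ∑ τ : Equiv.Perm (Fin r),
          (((Equiv.Perm.sign σ : ℤ) : ℂ) * ((Equiv.Perm.sign τ : ℤ) : ℂ)) *
            ∏ j, A (σ j) (τ j) := by
        refine Finset.sum_congr rfl fun σ _ => Finset.sum_congr rfl fun τ _ => ?_
        rw [integral_const_mul, hvol,
          integral_fintype_prod_volume_eq_prod (fun j t => f (σ j) t * g (τ j) t)]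
        rfl
    _ = ∑ τ : Equiv.Perm (Fin r), ∑ σ : Equiv.Perm (Fin r),
          (((Equiv.Perm.sign σ : ℤ) : ℂ) * ((Equiv.Perm.sign τ : ℤ) : ℂ)) *
            ∏ j, A (σ j) (τ j) := Finset.sum_comm
    _ = ∑ _τ : Equiv.Perm (Fin r), A.det := by
        refine Finset.sum_congr rfl fun τ _ => ?_
        rw [Matrix.det_apply']
        refine Fintype.sum_equiv (Equiv.mulRight τ⁻¹) _ _ fun π => ?_
        simp only [Equiv.coe_mulRight]
        have h1 : ∏ x, A ((π * τ⁻¹) x) x = ∏ j, A (π j) (τ j) := by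
          rw [← Equiv.prod_comp τ (fun k => A ((π * τ⁻¹) k) k)]
          simp [Equiv.Perm.mul_apply]
        have h2 : ((Equiv.Perm.sign (π * τ⁻¹) : ℤ) : ℂ)
            = ((Equiv.Perm.sign π : ℤ) : ℂ) * ((Equiv.Perm.sign τ : ℤ) : ℂ) := by
          rw [Equiv.Perm.sign_mul, Equiv.Perm.sign_inv]
          push_cast
          ring
        rw [h1, h2]
    _ = (r.factorial : ℂ) * A.det := by
        simp [Finset.sum_const, Finset.card_univ, Fintype.card_perm, Fintype.card_fin,
          nsmul_eq_mul]
end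

section
/- Single-spike contour formula for ${}_0F_0^{(1)}$: for x > 0 and y_1,…,y_n pairwise distinct complex numbers, ${}_0F_0^{(1)}(\mathrm{diag}(x,0,…,0), \mathrm{diag}(y_1,…,y_n)) = \frac{(n−1)!}{x^{n−1}} \cdot \frac{1}{2πι} ∮_C \frac{e^{xz}}{∏_{s=1}^n (z − y_s)} dz = \frac{(n−1)!}{x^{n−1}} ∑_{s=1}^n \frac{e^{x y_s}}{∏_{t≠s}(y_s − y_t)}$, where C encloses all y_s counter-clockwise. Equivalently, $∑_{k=0}^∞ \frac{x^k}{k!} \frac{C_{(k)}^{(1)}(y_1,…,y_n)}{C_{(k)}^{(1)}(1,…,1)} = \frac{(n−1)!}{x^{n−1}} ∑_{s=1}^n \frac{e^{x y_s}}{∏_{t≠s}(y_s − y_t)}$. -/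
open Complex

/-- The complete homogeneous symmetric polynomial `h_k(y₁,…,y_n)`. -/
noncomputable def completeHomogeneous (n k : ℕ) (y : Fin n → ℂ) : ℂ :=
  ∑ m : Sym (Fin n) k, ((m : Multiset (Fin n)).map y).prod

namespace SingleSpikeAux

open Finset

variable {ι : Type*} [DecidableEq ι]

/-- Complete homogeneous symmetric function over a finset of indices. -/
noncomputable def H (v : ι → ℂ) (s : Finset ι) (k : ℕ) : ℂ :=
  ∑ f ∈ s.piAntidiag k, ∏ i ∈ s, v i ^ f i

lemma H_empty (v : ι → ℂ) (k : ℕ) : H v ∅ k = if k = 0 then 1 else 0 := by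
  rcases eq_or_ne k 0 with rfl | hk
  · simp [H]
  · simp [H, Finset.piAntidiag_empty_of_ne_zero hk, hk]

lemma H_cons (v : ι → ℂ) {i : ι} {s : Finset ι} (hi : i ∉ s) (k : ℕ) :
    H v (cons i s hi) k = ∑ p ∈ Finset.HasAntidiagonal.antidiagonal k, v i ^ p.1 * H v s p.2 := by
  rw [H, Finset.piAntidiag_cons hi, Finset.sum_disjiUnion]
  refine Finset.sum_congr rfl fun p _ => ?_
  rw [Finset.sum_map, H, Finset.mul_sum]
  refine Finset.sum_congr rfl fun f hf => ?_
  have hfi : f i = 0 := by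
    rw [Finset.mem_piAntidiag] at hf
    by_contra h
    exact hi (hf.2 i h)
  rw [Finset.prod_cons]
  simp only [addRightEmbedding_apply, Pi.add_apply, hfi, zero_add, if_pos rfl]
  congr 1
  refine Finset.prod_congr rfl fun t ht => ?_
  have : t ≠ i := fun h => hi (h ▸ ht)
  simp [this]

lemma H_univ_eq (n k : ℕ) (y : Fin n → ℂ) :
    H y Finset.univ k = completeHomogeneous n k y := by
  rw [H, ← Finset.map_sym_eq_piAntidiag Finset.univ k, Finset.sum_map, completeHomogeneous,
    Finset.sym_univ]
  refine Finset.sum_congr rfl fun m _ => ?_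
  rw [Finset.prod_multiset_map_count]
  refine (Finset.prod_subset (Finset.subset_univ _) fun i _ hi => ?_).symm
  have : Multiset.count i (m : Multiset (Fin n)) = 0 :=
    Multiset.count_eq_zero_of_notMem (by simpa using hi)
  simp [this]

/-- Partial fraction decomposition via Lagrange interpolation. -/
lemma pf (v : ι → ℂ) {s : Finset ι} (hvs : Set.InjOn v ↑s) (hs : s.Nonempty)
    {z : ℂ} (hz : ∀ t ∈ s, z ≠ v t) :
    ∑ j ∈ s, (∏ t ∈ s.erase j, (v j - v t))⁻¹ * (z - v j)⁻¹
      = (∏ t ∈ s, (z - v t))⁻¹ := by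
  have hzt : ∀ t ∈ s, z - v t ≠ 0 := fun t ht => sub_ne_zero.mpr (hz t ht)
  have h1 : ∑ j ∈ s, Polynomial.eval z (Lagrange.basis s v j) = 1 := by
    rw [← Polynomial.eval_finset_sum, Lagrange.sum_basis hvs hs, Polynomial.eval_one]
  have h2 : ∀ j ∈ s, Polynomial.eval z (Lagrange.basis s v j)
      = (∏ t ∈ s.erase j, (v j - v t))⁻¹ * ∏ t ∈ s.erase j, (z - v t) := by
    intro j _
    rw [Lagrange.basis, Polynomial.eval_prod, ← Finset.prod_inv_distrib,
      ← Finset.prod_mul_distrib]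
    refine Finset.prod_congr rfl fun t _ => ?_
    simp [Lagrange.basisDivisor]
  have key : ∑ j ∈ s, (∏ t ∈ s.erase j, (v j - v t))⁻¹ * ∏ t ∈ s.erase j, (z - v t) = 1 := by
    rw [← h1]
    exact (Finset.sum_congr rfl h2).symm
  have hP : (∏ t ∈ s, (z - v t)) ≠ 0 := Finset.prod_ne_zero_iff.mpr hzt
  refine mul_right_cancel₀ hP ?_
  rw [Finset.sum_mul, inv_mul_cancel₀ hP, ← key]
  refine Finset.sum_congr rfl fun j hj => ?_
  rw [← Finset.mul_prod_erase s _ hj, mul_assoc, ← mul_assoc ((z - v j)⁻¹),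
    inv_mul_cancel₀ (hzt j hj), one_mul]

/-- The key divided-difference identity: `∑_j v_j^m / ∏_{t≠j}(v_j - v_t) = h_{m+1-|s|}`. -/
lemma keyS (v : ι → ℂ) (s : Finset ι) (hvs : Set.InjOn v ↑s) (m : ℕ) :
    ∑ j ∈ s, v j ^ m * (∏ t ∈ s.erase j, (v j - v t))⁻¹
      = if s.card ≤ m + 1 then H v s (m + 1 - s.card) else 0 := by
  induction s using Finset.cons_induction generalizing m with
  | empty => simp [H_empty]
  | cons i s hi IH =>
    have hvs' : Set.InjOn v ↑s := by
      refine hvs.mono ?_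
      rw [Finset.coe_cons]
      exact Set.subset_insert _ _
    have hvi : ∀ j ∈ s, v i ≠ v j := by
      intro j hj h
      have hij : i = j := hvs (by simp) (by simp [hj]) h
      exact hi (hij ▸ hj)
    have e1 : (Finset.cons i s hi).erase i = s := by
      rw [Finset.cons_eq_insert, Finset.erase_insert hi]
    have e2 : ∀ j ∈ s, (Finset.cons i s hi).erase j = Finset.cons i (s.erase j)
        (fun h => hi (Finset.mem_of_mem_erase h)) := by
      intro j hj
      have hij : i ≠ j := fun h => hi (h ▸ hj)
      rw [Finset.cons_eq_insert, Finset.cons_eq_insert, Finset.erase_insert_of_ne hij]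
    have hcard : (Finset.cons i s hi).card = s.card + 1 := Finset.card_cons hi
    rw [Finset.sum_cons, e1]
    rcases s.eq_empty_or_nonempty with rfl | hne
    · -- singleton case
      simp only [Finset.sum_empty, Finset.prod_empty, inv_one, mul_one, add_zero]
      have hcond : (Finset.cons i (∅ : Finset ι) hi).card ≤ m + 1 := by simp
      rw [if_pos hcond, H_cons, Finset.card_cons, Finset.card_empty]
      simp only [zero_add, Nat.add_sub_cancel]
      rw [Finset.Nat.sum_antidiagonal_eq_sum_range_succ_mk]
      rw [Finset.sum_eq_single m]
      · simp [H_empty]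
      · intro k hk hkm
        have hlt : k < m :=
          lt_of_le_of_ne (Nat.lt_succ_iff.mp (Finset.mem_range.mp hk)) hkm
        have hne0 : m - k ≠ 0 := Nat.sub_ne_zero_of_lt hlt
        simp [H_empty, hne0]
      · intro h
        exact absurd (Finset.self_mem_range_succ m) h
    · -- main case: s nonempty
      have hsub : ∀ j ∈ s, v j - v i ≠ 0 :=
        fun j hj => sub_ne_zero.mpr fun h => (hvi j hj) h.symm
      have step1 : ∀ j ∈ s, v j ^ m * (∏ t ∈ (Finset.cons i s hi).erase j, (v j - v t))⁻¹
          = (∑ a ∈ Finset.range m, v i ^ (m - 1 - a) * (v j ^ a *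
              (∏ t ∈ s.erase j, (v j - v t))⁻¹))
            + v i ^ m * ((v j - v i)⁻¹ * (∏ t ∈ s.erase j, (v j - v t))⁻¹) := by
        intro j hj
        rw [e2 j hj, Finset.prod_cons, mul_inv]
        have hd := hsub j hj
        have hgeom : v j ^ m = (∑ a ∈ Finset.range m, v j ^ a * v i ^ (m - 1 - a))
            * (v j - v i) + v i ^ m := by
          rw [geom_sum₂_mul]; ring
        rw [hgeom, add_mul]
        congr 1
        have hQ : (v j - v i) * ((v j - v i)⁻¹ * (∏ t ∈ s.erase j, (v j - v t))⁻¹)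
            = (∏ t ∈ s.erase j, (v j - v t))⁻¹ := by
          rw [← mul_assoc, mul_inv_cancel₀ hd, one_mul]
        rw [mul_assoc, hQ, Finset.sum_mul]
        exact Finset.sum_congr rfl fun a _ => by ring
      rw [Finset.sum_congr rfl step1, Finset.sum_add_distrib]
      have hPF : ∑ j ∈ s, (∏ t ∈ s.erase j, (v j - v t))⁻¹ * (v i - v j)⁻¹
          = (∏ t ∈ s, (v i - v t))⁻¹ := pf v hvs' hne (fun t ht => hvi t ht)
      have hcancel : ∑ j ∈ s, v i ^ m * ((v j - v i)⁻¹ * (∏ t ∈ s.erase j, (v j - v t))⁻¹)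
          = - (v i ^ m * (∏ t ∈ s, (v i - v t))⁻¹) := by
        rw [← hPF, Finset.mul_sum, ← Finset.sum_neg_distrib]
        refine Finset.sum_congr rfl fun j hj => ?_
        have hneg : v j - v i = -(v i - v j) := by ring
        rw [hneg, inv_neg]
        ring
      rw [hcancel]
      have hswap : ∑ j ∈ s, ∑ a ∈ Finset.range m,
            v i ^ (m - 1 - a) * (v j ^ a * (∏ t ∈ s.erase j, (v j - v t))⁻¹)
          = ∑ a ∈ Finset.range m, v i ^ (m - 1 - a) *
              (if s.card ≤ a + 1 then H v s (a + 1 - s.card) else 0) := by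
        rw [Finset.sum_comm]
        refine Finset.sum_congr rfl fun a _ => ?_
        rw [← Finset.mul_sum, IH hvs' a]
      rw [hswap]
      have hc1 : 1 ≤ s.card := Finset.Nonempty.card_pos hne
      have hfinal : ∑ a ∈ Finset.range m, v i ^ (m - 1 - a) *
            (if s.card ≤ a + 1 then H v s (a + 1 - s.card) else 0)
          = if (Finset.cons i s hi).card ≤ m + 1
              then H v (Finset.cons i s hi) (m + 1 - (Finset.cons i s hi).card) else 0 := by
        rw [hcard]
        by_cases hm : s.card ≤ m
        · rw [if_pos (by omega)]
          have hm1 : m + 1 - (s.card + 1) = m - s.card := by omega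
          rw [hm1, H_cons, Finset.Nat.sum_antidiagonal_eq_sum_range_succ_mk]
          rw [← Finset.sum_range_reflect]
          have hr : ∀ b ∈ Finset.range m, v i ^ (m - 1 - (m - 1 - b)) *
                (if s.card ≤ (m - 1 - b) + 1 then H v s ((m - 1 - b) + 1 - s.card) else 0)
              = if b ≤ m - s.card then v i ^ b * H v s (m - s.card - b) else 0 := by
            intro b hb
            have hbm : b < m := Finset.mem_range.mp hb
            have h1 : m - 1 - (m - 1 - b) = b := by omega
            by_cases hbs : b ≤ m - s.card
            · have hcond : s.card ≤ (m - 1 - b) + 1 := by omega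
              have h2 : (m - 1 - b) + 1 - s.card = m - s.card - b := by omega
              rw [h1, h2, if_pos hcond, if_pos hbs]
            · have hcond : ¬ s.card ≤ (m - 1 - b) + 1 := by omega
              rw [h1, if_neg hcond, if_neg hbs, mul_zero]
          rw [Finset.sum_congr rfl hr]
          have hsubset : Finset.range (m - s.card + 1) ⊆ Finset.range m := by
            intro b hb
            rw [Finset.mem_range] at hb ⊢
            omega
          rw [← Finset.sum_subset hsubset (fun b hbm hbs => ?_)]
          · refine Finset.sum_congr rfl fun b hb => ?_
            rw [Finset.mem_range] at hb
            rw [if_pos (by omega)]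
          · rw [Finset.mem_range] at hbm hbs
            rw [if_neg (by omega)]
        · rw [if_neg (by omega)]
          refine Finset.sum_eq_zero fun a ha => ?_
          have ham : a < m := Finset.mem_range.mp ha
          rw [if_neg (by omega), mul_zero]
      rw [hfinal]
      ring



lemma circleIntegral_finset_sum {κ : Type*} (s : Finset κ) (f : κ → ℂ → ℂ) {c : ℂ} {R : ℝ}
    (h : ∀ i ∈ s, CircleIntegrable (f i) c R) :
    (∮ z in C(c, R), ∑ i ∈ s, f i z) = ∑ i ∈ s, ∮ z in C(c, R), f i z := by
  unfold circleIntegral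
  rw [← intervalIntegral.integral_finset_sum fun i hi => (h i hi).out]
  refine intervalIntegral.integral_congr fun θ _ => ?_
  simp [Finset.mul_sum]

end SingleSpikeAux

/-- Single-spike contour formula for `₀F₀^{(1)}`: for `x > 0` and pairwise distinct
`y₁,…,y_n`, the Jack series with rank-one first argument, which reduces (using
`C_{(k)}^{(1)}(y)/C_{(k)}^{(1)}(Iₙ) = h_k(y)·k!·(n−1)!/(n−1+k)!`) to
`∑ₖ x^k/k! · h_k(y) k! (n−1)!/(n−1+k)!`, equals
`(n−1)!/x^{n−1} · (1/(2πι)) ∮ e^{xz}/∏(z−y_s) dz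
  = (n−1)!/x^{n−1} · ∑_s e^{x y_s}/∏_{t≠s}(y_s−y_t)`. -/
theorem single_spike_contour_formula (n : ℕ) (hn : 0 < n) (x : ℝ) (hx : 0 < x)
    (y : Fin n → ℂ) (hdist : Function.Injective y)
    (R : ℝ) (hR : ∀ s, ‖y s‖ < R) :
    (∑' k : ℕ, ((x : ℂ) ^ k / (k.factorial : ℂ)) *
        (completeHomogeneous n k y * (k.factorial : ℂ) * ((n - 1).factorial : ℂ) /
          ((n - 1 + k).factorial : ℂ)))
      = (((n - 1).factorial : ℂ) / (x : ℂ) ^ (n - 1)) *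
        ((1 / (2 * Real.pi * Complex.I)) *
          ∮ z in C(0, R), Complex.exp ((x : ℂ) * z) / ∏ s, (z - y s)) ∧
    (((n - 1).factorial : ℂ) / (x : ℂ) ^ (n - 1)) *
        ((1 / (2 * Real.pi * Complex.I)) *
          ∮ z in C(0, R), Complex.exp ((x : ℂ) * z) / ∏ s, (z - y s))
      = (((n - 1).factorial : ℂ) / (x : ℂ) ^ (n - 1)) *
        ∑ s, Complex.exp ((x : ℂ) * y s) / ∏ t ∈ Finset.univ.erase s, (y s - y t) := by
  classical
  have hxC : (x : ℂ) ≠ 0 := Complex.ofReal_ne_zero.mpr hx.ne'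
  set c : Fin n → ℂ := fun s => (∏ t ∈ Finset.univ.erase s, (y s - y t))⁻¹ with hc
  have hinj : Set.InjOn y ↑(Finset.univ : Finset (Fin n)) := fun a _ b _ h => hdist h
  have huniv : (Finset.univ : Finset (Fin n)).Nonempty := ⟨⟨0, hn⟩, Finset.mem_univ _⟩
  have hR0 : 0 < R := lt_of_le_of_lt (norm_nonneg _) (hR ⟨0, hn⟩)
  have hcard : (Finset.univ : Finset (Fin n)).card = n := by simp
  -- Part 2 core computation: the contour integral equals the residue sum
  have h2 : ((1 : ℂ) / (2 * Real.pi * Complex.I)) *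
        (∮ z in C(0, R), Complex.exp ((x : ℂ) * z) / ∏ s, (z - y s))
      = ∑ s, Complex.exp ((x : ℂ) * y s) * c s := by
    have hEq : Set.EqOn (fun z => Complex.exp ((x : ℂ) * z) / ∏ s, (z - y s))
        (fun z => ∑ s, (z - y s)⁻¹ • (c s * Complex.exp ((x : ℂ) * z)))
        (Metric.sphere (0 : ℂ) R) := by
      intro z hz
      have hzR : ‖z‖ = R := by simpa [Complex.dist_eq] using hz
      have hzy : ∀ t ∈ (Finset.univ : Finset (Fin n)), z ≠ y t := by
        intro t _ h
        rw [h] at hzR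
        exact absurd hzR (ne_of_lt (hR t))
      simp only
      rw [div_eq_mul_inv, ← SingleSpikeAux.pf y hinj huniv hzy, Finset.mul_sum]
      refine Finset.sum_congr rfl fun s _ => ?_
      simp only [smul_eq_mul, hc]
      ring
    rw [circleIntegral.integral_congr hR0.le hEq]
    have hdiff : ∀ s : Fin n, Differentiable ℂ (fun z => c s * Complex.exp ((x : ℂ) * z)) := by
      intro s
      exact (differentiable_const _).mul
        (Complex.differentiable_exp.comp ((differentiable_const _).mul differentiable_id))
    have hci : ∀ s : Fin n, CircleIntegrable
        (fun z => (z - y s)⁻¹ • (c s * Complex.exp ((x : ℂ) * z))) 0 R := by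
      intro s
      refine ContinuousOn.circleIntegrable hR0.le ?_
      refine ContinuousOn.smul (ContinuousOn.inv₀
        ((continuous_id.sub continuous_const).continuousOn) ?_)
        ((hdiff s).continuous.continuousOn)
      intro z hz
      have hzR : ‖z‖ = R := by simpa [Complex.dist_eq] using hz
      intro h
      have hzy : z = y s := by
        have := sub_eq_zero.mp h
        exact this
      rw [hzy] at hzR
      exact absurd hzR (ne_of_lt (hR s))
    rw [SingleSpikeAux.circleIntegral_finset_sum _ _ (fun s _ => hci s)]
    have hres : ∀ s : Fin n,
        (∮ z in C(0, R), (z - y s)⁻¹ • (c s * Complex.exp ((x : ℂ) * z)))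
          = (2 * Real.pi * Complex.I : ℂ) • (c s * Complex.exp ((x : ℂ) * y s)) := by
      intro s
      refine DiffContOnCl.circleIntegral_sub_inv_smul ((hdiff s).diffContOnCl) ?_
      rw [Metric.mem_ball, Complex.dist_eq, sub_zero]
      exact hR s
    rw [Finset.sum_congr rfl fun s _ => hres s]
    have h2pi : (2 * (Real.pi : ℂ) * Complex.I) ≠ 0 := by
      simp [Real.pi_ne_zero, Complex.I_ne_zero, Complex.ofReal_ne_zero]
    rw [Finset.mul_sum]
    refine Finset.sum_congr rfl fun s _ => ?_
    simp only [smul_eq_mul]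
    rw [one_div]
    rw [← mul_assoc, inv_mul_cancel₀ (by exact_mod_cast h2pi), one_mul]
    ring
  -- The series computation
  have hS : ∀ m : ℕ, ∑ s, ((x : ℂ) * y s) ^ m / (m.factorial : ℂ) * c s
      = ((x : ℂ) ^ m / (m.factorial : ℂ)) *
          (if n ≤ m + 1 then completeHomogeneous n (m + 1 - n) y else 0) := by
    intro m
    have hkey := SingleSpikeAux.keyS y Finset.univ hinj m
    rw [hcard, SingleSpikeAux.H_univ_eq] at hkey
    calc ∑ s, ((x : ℂ) * y s) ^ m / (m.factorial : ℂ) * c s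
        = ((x : ℂ) ^ m / (m.factorial : ℂ)) *
            ∑ s, y s ^ m * (∏ t ∈ Finset.univ.erase s, (y s - y t))⁻¹ := by
          rw [Finset.mul_sum]
          refine Finset.sum_congr rfl fun s _ => ?_
          rw [mul_pow, hc]
          ring
      _ = _ := by rw [hkey]
  have hmain : ∑ s, Complex.exp ((x : ℂ) * y s) * c s
      = ∑' k : ℕ, ((x : ℂ) ^ (n - 1 + k) / (((n - 1 + k).factorial : ℕ) : ℂ)) *
          completeHomogeneous n k y := by
    have hsummable : ∀ s : Fin n,
        Summable (fun m : ℕ => ((x : ℂ) * y s) ^ m / (m.factorial : ℂ) * c s) :=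
      fun s => (NormedSpace.expSeries_div_summable ((x : ℂ) * y s)).mul_right _
    calc ∑ s, Complex.exp ((x : ℂ) * y s) * c s
        = ∑ s, ∑' m : ℕ, ((x : ℂ) * y s) ^ m / (m.factorial : ℂ) * c s := by
          refine Finset.sum_congr rfl fun s _ => ?_
          rw [Complex.exp_eq_exp_ℂ, NormedSpace.exp_eq_tsum_div, tsum_mul_right]
      _ = ∑' m : ℕ, ∑ s, ((x : ℂ) * y s) ^ m / (m.factorial : ℂ) * c s :=
          (Summable.tsum_finsetSum fun s _ => hsummable s).symm
      _ = ∑' m : ℕ, ((x : ℂ) ^ m / (m.factorial : ℂ)) *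
            (if n ≤ m + 1 then completeHomogeneous n (m + 1 - n) y else 0) := tsum_congr hS
      _ = ∑' k : ℕ, ((x : ℂ) ^ (n - 1 + k) / (((n - 1 + k).factorial : ℕ) : ℂ)) *
            completeHomogeneous n k y := by
          have hginj : Function.Injective (fun k : ℕ => n - 1 + k) := fun a b h => by
            simpa using Nat.add_left_cancel h
          have hsupp : Function.support (fun m : ℕ => ((x : ℂ) ^ m / (m.factorial : ℂ)) *
              (if n ≤ m + 1 then completeHomogeneous n (m + 1 - n) y else 0))
                ⊆ Set.range (fun k : ℕ => n - 1 + k) := by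
            intro m hm
            by_contra hmem
            have hlt : m < n - 1 := by
              by_contra hge
              exact hmem ⟨m - (n - 1), by show n - 1 + (m - (n - 1)) = m; omega⟩
            have : ¬ n ≤ m + 1 := by omega
            simp [this] at hm
          refine (Function.Injective.tsum_eq hginj hsupp).symm.trans (tsum_congr fun k => ?_)
          have e1 : n ≤ n - 1 + k + 1 := by omega
          have e2 : n - 1 + k + 1 - n = k := by omega
          rw [if_pos e1, e2]
  constructor
  · rw [h2, hmain, ← tsum_mul_left]
    refine tsum_congr fun k => ?_
    have hf1 : ((k.factorial : ℕ) : ℂ) ≠ 0 := Nat.cast_ne_zero.mpr k.factorial_ne_zero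
    have hf2 : (((n - 1 + k).factorial : ℕ) : ℂ) ≠ 0 :=
      Nat.cast_ne_zero.mpr (n - 1 + k).factorial_ne_zero
    have hxp : (x : ℂ) ^ (n - 1) ≠ 0 := pow_ne_zero _ hxC
    rw [pow_add]
    field_simp
  · rw [h2]
    congr 1
end
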